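/- arXiv:2210.00734 — 2 statements merged into one kernel-verified Lean document; each statement's English description precedes it below -/
import Mathlib

section
/- Let −3 < γ < 0 and let μ(v) = (2π)^{3/2} e^{−|v|²/2}. For f ∈ L²(ℝ³) with ⟨·⟩^{γ/2} f ∈ L²(ℝ³), define for each v ∈ ℝ³ the integral A₂(v) = ∫_{|v−v'| ≥ 1} |v−v'|^γ μ^{1/2}(v') |f(v')| dv'. Then there is a constant C > 0 independent of f and v such that A₂(v) ≤ C ⟨v⟩^{γ+2} ‖⟨·⟩^{γ/2} f‖_{L²}. -/
open MeasureTheory Real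

lemma poly_exp_bound (t : ℝ) (ht : 0 ≤ t) : (1+t)^2 * Real.exp (-(t/8)) ≤ 256 := by
  have h1 : t/16 + 1 ≤ Real.exp (t/16) := Real.add_one_le_exp _
  have h2 : Real.exp (-(t/8)) = (Real.exp (t/16))⁻¹ * (Real.exp (t/16))⁻¹ := by
    rw [← Real.exp_neg, ← Real.exp_add]; ring_nf
  have h3 : (0:ℝ) < Real.exp (t/16) := Real.exp_pos _
  rw [h2]
  rw [div_add' _ _ _ (by norm_num : (16:ℝ) ≠ 0)] at h1
  have h4 : (1+t) ≤ 16 * Real.exp (t/16) := by nlinarith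
  have h5 : (1+t)^2 ≤ 256 * (Real.exp (t/16) * Real.exp (t/16)) := by nlinarith
  calc (1+t)^2 * ((Real.exp (t/16))⁻¹ * (Real.exp (t/16))⁻¹)
      ≤ 256 * (Real.exp (t/16) * Real.exp (t/16)) * ((Real.exp (t/16))⁻¹ * (Real.exp (t/16))⁻¹) := by
        apply mul_le_mul_of_nonneg_right h5; positivity
    _ = 256 := by field_simp

-- (1+t)*exp(-t/4) ≤ 256 and (1+t)^2*exp(-t/4) ≤ 256 etc
lemma poly_exp_bound' (t : ℝ) (ht : 0 ≤ t) : (1+t)^2 * Real.exp (-(t/4)) ≤ 256 := by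
  have := poly_exp_bound t ht
  have hexp : Real.exp (-(t/4)) ≤ Real.exp (-(t/8)) := by
    apply Real.exp_le_exp.2; linarith
  nlinarith [sq_nonneg (1+t), Real.exp_pos (-(t/4))]

set_option maxHeartbeats 1000000 in
lemma core_bound {s a r d : ℝ} (hs1 : -2 ≤ s) (hs2 : s ≤ 4) (hd : 1 ≤ d)
    (ha : 0 ≤ a) (hr : 0 ≤ r) (hdar : d ≤ a + r) (hadr : a ≤ d + r) :
    d ^ s * Real.exp (-(r^2/4)) ≤ 2048 * (1+a^2) ^ (s/2) := by
  have hd0 : (0:ℝ) ≤ d := le_trans zero_le_one hd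
  have ha2 : (1:ℝ) ≤ 1 + a^2 := by nlinarith
  have ha2' : (0:ℝ) < 1 + a^2 := by linarith
  have hexp0 : (0:ℝ) < Real.exp (-(r^2/4)) := Real.exp_pos _
  have hexp1 : Real.exp (-(r^2/4)) ≤ 1 := Real.exp_le_one_iff.2 (by nlinarith [sq_nonneg r])
  have hApos : (0:ℝ) < (1+a^2) ^ (s/2) := Real.rpow_pos_of_pos ha2' _
  obtain ⟨B, hB⟩ : ∃ B, B = Real.sqrt (1+a^2) := ⟨_, rfl⟩
  have hB0 : 0 < B := hB ▸ Real.sqrt_pos.2 ha2'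
  have hB1 : 1 ≤ B := by
    have h := Real.sqrt_le_sqrt ha2
    rw [Real.sqrt_one] at h
    rw [hB]; exact h
  have haB : a ≤ B := by
    rw [hB]
    calc a = Real.sqrt (a^2) := (Real.sqrt_sq ha).symm
      _ ≤ Real.sqrt (1+a^2) := Real.sqrt_le_sqrt (by linarith)
  have hBs : ∀ u : ℝ, B ^ u = (1+a^2) ^ (u/2) := by
    intro u
    rw [hB, Real.sqrt_eq_rpow, ← Real.rpow_mul (le_of_lt ha2')]
    ring_nf
  have hpoly2 : (1+r^2)^2 * Real.exp (-(r^2/4)) ≤ 256 := poly_exp_bound' (r^2) (by positivity)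
  rcases le_or_gt 0 s with hs | hs
  · -- s ≥ 0 : d ≤ B (1+r)
    have hdb : d ≤ B * (1+r) := by nlinarith
    have h1 : d ^ s ≤ (B * (1+r)) ^ s := Real.rpow_le_rpow hd0 hdb hs
    have h2 : (B * (1+r)) ^ s = B ^ s * (1+r) ^ s := Real.mul_rpow (le_of_lt hB0) (by linarith)
    have h3 : (1+r) ^ s ≤ (1+r) ^ (4:ℝ) := Real.rpow_le_rpow_of_exponent_le (by linarith) hs2
    have h4 : (1+r) ^ (4:ℝ) = ((1+r)^2)^2 := by
      rw [show ((4:ℝ)) = ((4:ℕ):ℝ) by norm_num, Real.rpow_natCast]; ring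
    have h6 : ((1+r)^2)^2 ≤ 4*(1+r^2)^2 := by nlinarith [sq_nonneg (1-r), sq_nonneg (1+r), sq_nonneg (1+r^2)]
    have h5 : ((1+r)^2)^2 * Real.exp (-(r^2/4)) ≤ 1024 := by
      calc ((1+r)^2)^2 * Real.exp (-(r^2/4)) ≤ 4*(1+r^2)^2 * Real.exp (-(r^2/4)) :=
            mul_le_mul_of_nonneg_right h6 hexp0.le
        _ = 4*((1+r^2)^2 * Real.exp (-(r^2/4))) := by ring
        _ ≤ 4*256 := by linarith
        _ = 1024 := by norm_num
    have hBs' : 0 ≤ B ^ s := Real.rpow_nonneg (le_of_lt hB0) _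
    have hrs0 : 0 ≤ (1+r) ^ s := Real.rpow_nonneg (by linarith) _
    calc d ^ s * Real.exp (-(r^2/4)) ≤ (B * (1+r)) ^ s * Real.exp (-(r^2/4)) :=
          mul_le_mul_of_nonneg_right h1 hexp0.le
      _ = B ^ s * ((1+r) ^ s * Real.exp (-(r^2/4))) := by rw [h2]; ring
      _ ≤ B ^ s * ((1+r) ^ (4:ℝ) * Real.exp (-(r^2/4))) :=
          mul_le_mul_of_nonneg_left (mul_le_mul_of_nonneg_right h3 hexp0.le) hBs'
      _ ≤ B ^ s * 1024 := mul_le_mul_of_nonneg_left (by rw [h4]; exact h5) hBs'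
      _ = 1024 * (1+a^2) ^ (s/2) := by rw [hBs s]; ring
      _ ≤ 2048 * (1+a^2) ^ (s/2) := by nlinarith
  · -- s < 0
    have hds : d ^ s ≤ 1 := Real.rpow_le_one_of_one_le_of_nonpos hd (le_of_lt hs)
    have hds0 : 0 ≤ d ^ s := Real.rpow_nonneg hd0 _
    rcases le_or_gt a (2*r) with hcase | hcase
    · -- a ≤ 2r
      have h1 : (1+a^2) ≤ 4*(1+r^2) := by nlinarith
      have h2 : (1+a^2) ^ (-(s/2)) ≤ (4*(1+r^2)) ^ (-(s/2)) :=
        Real.rpow_le_rpow (by positivity) h1 (by linarith)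
      have h3 : (4*(1+r^2)) ^ (-(s/2)) ≤ (4*(1+r^2)) ^ (1:ℝ) :=
        Real.rpow_le_rpow_of_exponent_le (by nlinarith) (by linarith)
      have h4 : (1+a^2) ^ (-(s/2)) * Real.exp (-(r^2/4)) ≤ 2048 := by
        rw [Real.rpow_one] at h3
        have h5 : (4*(1+r^2)) * Real.exp (-(r^2/4)) ≤ 1024 := by
          have h7 : (1+r^2) ≤ (1+r^2)^2 := by nlinarith
          calc (4*(1+r^2)) * Real.exp (-(r^2/4)) ≤ (4*(1+r^2)^2) * Real.exp (-(r^2/4)) := by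
                apply mul_le_mul_of_nonneg_right _ hexp0.le; linarith
            _ = 4 * ((1+r^2)^2 * Real.exp (-(r^2/4))) := by ring
            _ ≤ 4*256 := by linarith
            _ = 1024 := by norm_num
        calc (1+a^2) ^ (-(s/2)) * Real.exp (-(r^2/4)) ≤ (4*(1+r^2)) * Real.exp (-(r^2/4)) :=
              mul_le_mul_of_nonneg_right (le_trans h2 h3) hexp0.le
          _ ≤ 1024 := h5
          _ ≤ 2048 := by norm_num
      have hmul : (1+a^2) ^ (s/2) * (1+a^2) ^ (-(s/2)) = 1 := by
        rw [← Real.rpow_add ha2']; simp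
      have hfin : Real.exp (-(r^2/4)) ≤ 2048 * (1+a^2) ^ (s/2) := by
        calc Real.exp (-(r^2/4))
            = (1+a^2) ^ (s/2) * ((1+a^2) ^ (-(s/2)) * Real.exp (-(r^2/4))) := by
              rw [← mul_assoc, hmul, one_mul]
          _ ≤ (1+a^2) ^ (s/2) * 2048 := mul_le_mul_of_nonneg_left h4 hApos.le
          _ = 2048 * (1+a^2) ^ (s/2) := by ring
      calc d ^ s * Real.exp (-(r^2/4)) ≤ 1 * Real.exp (-(r^2/4)) :=
            mul_le_mul_of_nonneg_right hds hexp0.le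
        _ = Real.exp (-(r^2/4)) := one_mul _
        _ ≤ 2048 * (1+a^2) ^ (s/2) := hfin
    · -- 2r < a : then a/2 < d, d² ≥ (1+a²)/8
      have hd2 : (1+a^2)/8 ≤ d^2 := by nlinarith
      have h1 : d ^ s = (d^2) ^ (s/2) := by
        rw [← Real.rpow_natCast d 2, ← Real.rpow_mul hd0]; ring_nf
      have h2 : (d^2) ^ (s/2) ≤ ((1+a^2)/8) ^ (s/2) :=
        Real.rpow_le_rpow_of_nonpos (by positivity) hd2 (by linarith)
      have h3 : ((1+a^2)/8) ^ (s/2) = (1+a^2) ^ (s/2) * ((8:ℝ) ^ (s/2))⁻¹ := by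
        rw [Real.div_rpow ha2'.le (by norm_num)]
        ring
      have h4 : ((8:ℝ) ^ (s/2))⁻¹ ≤ 8 := by
        rw [← Real.rpow_neg (by norm_num : (0:ℝ) ≤ 8)]
        calc (8:ℝ) ^ (-(s/2)) ≤ (8:ℝ) ^ (1:ℝ) :=
            Real.rpow_le_rpow_of_exponent_le (by norm_num) (by linarith)
          _ = 8 := Real.rpow_one _
      calc d ^ s * Real.exp (-(r^2/4)) ≤ d ^ s * 1 := mul_le_mul_of_nonneg_left hexp1 hds0
        _ = (d^2) ^ (s/2) := by rw [mul_one, h1]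
        _ ≤ ((1+a^2)/8) ^ (s/2) := h2
        _ = (1+a^2) ^ (s/2) * ((8:ℝ) ^ (s/2))⁻¹ := h3
        _ ≤ (1+a^2) ^ (s/2) * 8 := mul_le_mul_of_nonneg_left h4 hApos.le
        _ ≤ 2048 * (1+a^2) ^ (s/2) := by nlinarith

lemma pointwise_real {γ a r d : ℝ} (hγ1 : -3 < γ) (hγ2 : γ < 0) (hd : 1 ≤ d)
    (ha : 0 ≤ a) (hr : 0 ≤ r) (hdar : d ≤ a + r) (hadr : a ≤ d + r) :
    (d ^ (γ+2) * Real.sqrt ((2*π)^(3/2:ℝ) * Real.exp (-r^2/2)) * (1+r^2) ^ (-(γ/4)))^2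
      ≤ (2*π)^(3/2:ℝ) * 2048 * 256 * (1+a^2)^(γ+2) * Real.exp (-((1:ℝ)/8 * r^2)) := by
  have hd0 : (0:ℝ) ≤ d := le_trans zero_le_one hd
  have hr2 : (0:ℝ) < 1 + r^2 := by positivity
  have h2pi : (0:ℝ) ≤ (2*π)^(3/2:ℝ) := Real.rpow_nonneg (by positivity) _
  have hμ : (0:ℝ) ≤ (2*π)^(3/2:ℝ) * Real.exp (-r^2/2) := by positivity
  -- expand the square
  have hsq : (d ^ (γ+2) * Real.sqrt ((2*π)^(3/2:ℝ) * Real.exp (-r^2/2)) * (1+r^2) ^ (-(γ/4)))^2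
      = d ^ (2*γ+4) * ((2*π)^(3/2:ℝ) * Real.exp (-r^2/2)) * (1+r^2) ^ (-(γ/2)) := by
    rw [mul_pow, mul_pow, Real.sq_sqrt hμ, ← Real.rpow_natCast (d ^ (γ+2)) 2,
      ← Real.rpow_natCast ((1+r^2) ^ (-(γ/4))) 2,
      ← Real.rpow_mul hd0, ← Real.rpow_mul hr2.le]
    norm_num
    ring_nf
  rw [hsq]
  -- split the exponential
  have hexp : Real.exp (-r^2/2)
      = Real.exp (-(r^2/4)) * Real.exp (-(r^2/8)) * Real.exp (-((1:ℝ)/8 * r^2)) := by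
    rw [← Real.exp_add, ← Real.exp_add]; ring_nf
  -- factor bounds
  have hT1 : d ^ (2*γ+4) * Real.exp (-(r^2/4)) ≤ 2048 * (1+a^2)^(γ+2) := by
    have h := core_bound (s := 2*γ+4) (by linarith) (by linarith) hd ha hr hdar hadr
    rwa [show (2*γ+4)/2 = γ+2 by ring] at h
  have hT2 : (1+r^2) ^ (-(γ/2)) * Real.exp (-(r^2/8)) ≤ 256 := by
    have h1 : (1+r^2) ^ (-(γ/2)) ≤ (1+r^2) ^ (2:ℝ) :=
      Real.rpow_le_rpow_of_exponent_le (by nlinarith [sq_nonneg r]) (by linarith)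
    have h2 : (1+r^2) ^ (2:ℝ) = (1+r^2)^2 := Real.rpow_two _
    have h3 := poly_exp_bound (r^2) (by positivity)
    have he : (0:ℝ) < Real.exp (-(r^2/8)) := Real.exp_pos _
    calc (1+r^2) ^ (-(γ/2)) * Real.exp (-(r^2/8))
        ≤ (1+r^2)^2 * Real.exp (-(r^2/8)) := by
          apply mul_le_mul_of_nonneg_right _ he.le
          rw [← h2]; exact h1
      _ ≤ 256 := h3
  have hds : 0 ≤ d ^ (2*γ+4) := Real.rpow_nonneg hd0 _
  have hrs : 0 ≤ (1+r^2) ^ (-(γ/2)) := Real.rpow_nonneg hr2.le _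
  have hA : 0 ≤ (1+a^2)^(γ+2) := Real.rpow_nonneg (by positivity) _
  have he1 : 0 < Real.exp (-(r^2/4)) := Real.exp_pos _
  have he2 : 0 < Real.exp (-(r^2/8)) := Real.exp_pos _
  have he3 : 0 < Real.exp (-((1:ℝ)/8*r^2)) := Real.exp_pos _
  calc d ^ (2*γ+4) * ((2*π)^(3/2:ℝ) * Real.exp (-r^2/2)) * (1+r^2) ^ (-(γ/2))
      = (2*π)^(3/2:ℝ) * ((d ^ (2*γ+4) * Real.exp (-(r^2/4)))
          * ((1+r^2) ^ (-(γ/2)) * Real.exp (-(r^2/8)))) * Real.exp (-((1:ℝ)/8*r^2)) := by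
        rw [hexp]; ring
    _ ≤ (2*π)^(3/2:ℝ) * ((2048 * (1+a^2)^(γ+2)) * 256) * Real.exp (-((1:ℝ)/8*r^2)) := by
        apply mul_le_mul_of_nonneg_right _ he3.le
        apply mul_le_mul_of_nonneg_left _ h2pi
        apply mul_le_mul hT1 hT2 (by positivity) (by positivity)
    _ = (2*π)^(3/2:ℝ) * 2048 * 256 * (1+a^2)^(γ+2) * Real.exp (-((1:ℝ)/8*r^2)) := by ring

lemma gauss_integrable {b : ℝ} (hb : 0 < b) :
    Integrable (fun v : EuclideanSpace ℝ (Fin 3) => Real.exp (-(b * ‖v‖^2))) := by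
  have h := (GaussianFourier.integrable_cexp_neg_mul_sq_norm_add
    (V := EuclideanSpace ℝ (Fin 3)) (b := (b:ℂ)) (by simpa using hb) 0 0).norm
  convert h using 2 with v
  simp [Complex.norm_exp]
  exact Or.inl (by simp [← Complex.ofReal_pow])

lemma measurable_rpow_const_of_nonneg {α : Type*} [MeasurableSpace α] {g : α → ℝ}
    (hg : Measurable g) (h0 : ∀ x, 0 ≤ g x) (c : ℝ) : Measurable fun x => g x ^ c := by
  have heq : (fun x => g x ^ c)
      = fun x => if g x = 0 then (0:ℝ) ^ c else Real.exp (Real.log (g x) * c) := by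
    funext x
    by_cases h : g x = 0
    · simp [h]
    · have hpos : 0 < g x := lt_of_le_of_ne (h0 x) (Ne.symm h)
      rw [if_neg h, Real.rpow_def_of_pos hpos]
  rw [heq]
  exact Measurable.ite (hg (measurableSet_singleton 0)) measurable_const
    ((Real.measurable_log.comp hg).mul measurable_const).exp


set_option maxHeartbeats 2000000 in
/-- For `−3 < γ < 0` and `μ(v) = (2π)^{3/2} e^{−|v|²/2}`, the far-field part
`A₂(v) = ∫_{|v−v'|≥1} |v−v'|^γ μ^{1/2}(v') |f(v')| dv'` is bounded by
`C ⟨v⟩^{γ+2} ‖⟨·⟩^{γ/2} f‖_{L²}`. -/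
theorem far_field_bound (γ : ℝ) (hγ1 : -3 < γ) (hγ2 : γ < 0) :
    ∃ C > 0, ∀ f : EuclideanSpace ℝ (Fin 3) → ℝ,
      MemLp f 2 (volume : Measure (EuclideanSpace ℝ (Fin 3))) →
      MemLp (fun v' => (1 + ‖v'‖ ^ 2) ^ (γ / 4) * f v') 2
        (volume : Measure (EuclideanSpace ℝ (Fin 3))) →
      ∀ v : EuclideanSpace ℝ (Fin 3),
        (∫ v' in {v' : EuclideanSpace ℝ (Fin 3) | 1 ≤ ‖v - v'‖},
            ‖v - v'‖ ^ γ * Real.sqrt ((2 * π) ^ (3 / 2 : ℝ) * Real.exp (-‖v'‖ ^ 2 / 2)) * |f v'|)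
          ≤ C * (1 + ‖v‖ ^ 2) ^ ((γ + 2) / 2) *
            (∫ v' : EuclideanSpace ℝ (Fin 3),
              ((1 + ‖v'‖ ^ 2) ^ (γ / 4) * |f v'|) ^ 2) ^ (1 / 2 : ℝ) := by
  have hπ : (0:ℝ) < 2 * π := by positivity
  set K : ℝ := (2*π)^(3/2:ℝ) * 2048 * 256 with hK
  have hK0 : 0 < K := by positivity
  have hg8 : Integrable (fun v : EuclideanSpace ℝ (Fin 3) =>
      Real.exp (-((1:ℝ)/8 * ‖v‖^2))) := gauss_integrable (by norm_num)
  set Ig : ℝ := ∫ v : EuclideanSpace ℝ (Fin 3), Real.exp (-((1:ℝ)/8 * ‖v‖^2)) with hIg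
  have hIg0 : 0 ≤ Ig := integral_nonneg (fun _ => (Real.exp_pos _).le)
  set C₀ : ℝ := K * Ig + 1 with hC₀
  have hC₀0 : 0 < C₀ := by positivity
  refine ⟨C₀ ^ (1/2:ℝ), Real.rpow_pos_of_pos hC₀0 _, ?_⟩
  intro f hf hfg v
  have hv2 : (0:ℝ) < 1 + ‖v‖^2 := by positivity
  have hApow : (0:ℝ) < (1 + ‖v‖^2) ^ (γ+2) := Real.rpow_pos_of_pos hv2 _
  set S := {v' : EuclideanSpace ℝ (Fin 3) | 1 ≤ ‖v - v'‖} with hSdef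
  have hSm : MeasurableSet S :=
    measurableSet_le measurable_const ((continuous_const.sub continuous_id).norm.measurable)
  set G := fun v' : EuclideanSpace ℝ (Fin 3) =>
    ‖v - v'‖ ^ (γ+2) * Real.sqrt ((2 * π) ^ (3 / 2 : ℝ) * Real.exp (-‖v'‖ ^ 2 / 2))
      * (1 + ‖v'‖ ^ 2) ^ (-(γ/4)) with hGdef
  set H := fun v' : EuclideanSpace ℝ (Fin 3) => (1 + ‖v'‖ ^ 2) ^ (γ / 4) * |f v'| with hHdef
  -- measurability
  have hGm : Measurable G := by
    apply Measurable.mul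
    apply Measurable.mul
    · exact measurable_rpow_const_of_nonneg
        ((continuous_const.sub continuous_id).norm.measurable) (fun _ => norm_nonneg _) _
    · exact (Real.continuous_sqrt.comp (continuous_const.mul
        (Real.continuous_exp.comp (((continuous_norm.pow 2).neg).div_const 2)))).measurable
    · exact measurable_rpow_const_of_nonneg
        ((continuous_const.add (continuous_norm.pow 2)).measurable) (fun x => add_nonneg zero_le_one (sq_nonneg _)) _
  have habs : AEStronglyMeasurable (fun v' => |f v'|) volume :=
    hf.1.norm.congr (Filter.Eventually.of_forall fun x => (Real.norm_eq_abs (f x)))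
  have hHsm : AEStronglyMeasurable H volume :=
    ((measurable_rpow_const_of_nonneg ((continuous_const.add (continuous_norm.pow 2)).measurable)
      (fun x => add_nonneg zero_le_one (sq_nonneg _)) _).aestronglyMeasurable).mul habs
  -- pointwise bound on G² over S
  have hGpt : ∀ v' ∈ S, (G v')^2 ≤ K * (1 + ‖v‖^2)^(γ+2) * Real.exp (-((1:ℝ)/8 * ‖v'‖^2)) := by
    intro v' hv'
    have hadr : ‖v‖ ≤ ‖v - v'‖ + ‖v'‖ := by
      calc ‖v‖ = ‖(v - v') + v'‖ := by rw [sub_add_cancel]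
        _ ≤ ‖v - v'‖ + ‖v'‖ := norm_add_le _ _
    have h := pointwise_real (a := ‖v‖) (r := ‖v'‖) (d := ‖v - v'‖) hγ1 hγ2 hv'
      (norm_nonneg v) (norm_nonneg v') (norm_sub_le v v') hadr
    calc (G v')^2 ≤ (2*π)^(3/2:ℝ) * 2048 * 256 * (1+‖v‖^2)^(γ+2)
          * Real.exp (-((1:ℝ)/8 * ‖v'‖^2)) := h
      _ = K * (1 + ‖v‖^2)^(γ+2) * Real.exp (-((1:ℝ)/8 * ‖v'‖^2)) := by rw [hK]
  -- dominating function
  have hDom : Integrable (fun v' : EuclideanSpace ℝ (Fin 3) =>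
      K * (1 + ‖v‖^2)^(γ+2) * Real.exp (-((1:ℝ)/8 * ‖v'‖^2))) := by
    exact hg8.const_mul (K * (1 + ‖v‖^2)^(γ+2))
  -- G² integrable on S
  have hG2int : IntegrableOn (fun v' => (G v')^2) S volume := by
    apply Integrable.mono' hDom.restrict ((hGm.pow_const 2).aestronglyMeasurable.restrict)
    rw [ae_restrict_iff' hSm]
    exact Filter.Eventually.of_forall fun v' hv' => by
      rw [Real.norm_eq_abs, abs_of_nonneg (sq_nonneg _)]
      exact hGpt v' hv'
  -- the key integral bound
  have hkey : ∫ v' in S, (G v')^2 ≤ C₀ * (1 + ‖v‖^2)^(γ+2) := by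
    calc ∫ v' in S, (G v')^2
        ≤ ∫ v' in S, K * (1 + ‖v‖^2)^(γ+2) * Real.exp (-((1:ℝ)/8 * ‖v'‖^2)) :=
          setIntegral_mono_on hG2int hDom.integrableOn hSm hGpt
      _ ≤ ∫ v', K * (1 + ‖v‖^2)^(γ+2) * Real.exp (-((1:ℝ)/8 * ‖v'‖^2)) :=
          setIntegral_le_integral hDom (Filter.Eventually.of_forall fun _ => by positivity)
      _ = K * (1 + ‖v‖^2)^(γ+2) * Ig := by
          simp_rw [mul_assoc]
          rw [MeasureTheory.integral_const_mul, MeasureTheory.integral_const_mul]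
      _ ≤ C₀ * (1 + ‖v‖^2)^(γ+2) := by nlinarith [hApow, hK0, hIg0]
  -- Memℒp facts
  have hGmem : MemLp G 2 (volume.restrict S) :=
    (memLp_two_iff_integrable_sq (hGm.aestronglyMeasurable.restrict)).2 hG2int
  have hH2 : Integrable (fun v' => (H v')^2) volume := by
    apply (hfg.integrable_sq).congr
    exact Filter.Eventually.of_forall fun v' => by
      simp only [hHdef, mul_pow, sq_abs]
  have hHmem : MemLp H 2 (volume.restrict S) :=
    (memLp_two_iff_integrable_sq (hHsm.restrict)).2 hH2.restrict
  -- integrability of G * H on S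
  have hGH : Integrable (fun v' => G v' * H v') (volume.restrict S) := by
    apply Integrable.mono' (((hG2int.add hH2.restrict).div_const 2))
      (hGm.aestronglyMeasurable.restrict.mul hHsm.restrict)
    exact Filter.Eventually.of_forall fun v' => by
      simp only [Pi.mul_apply, Pi.add_apply, Real.norm_eq_abs, abs_mul]
      nlinarith [sq_nonneg (|G v'| - |H v'|), sq_abs (G v'), sq_abs (H v'), abs_nonneg (G v'), abs_nonneg (H v')]
  -- step 1 : the integrand is below G * H on S
  have hstep1 : (∫ v' in S,
      ‖v - v'‖ ^ γ * Real.sqrt ((2 * π) ^ (3 / 2 : ℝ) * Real.exp (-‖v'‖ ^ 2 / 2)) * |f v'|)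
      ≤ ∫ v' in S, G v' * H v' := by
    apply integral_mono_of_nonneg
    · exact Filter.Eventually.of_forall fun v' => by positivity
    · exact hGH
    · refine (ae_restrict_iff' hSm).2 (Filter.Eventually.of_forall fun v' hv' => ?_)
      have hv'1 : (1:ℝ) ≤ ‖v - v'‖ := hv'
      have hr2 : (0:ℝ) < 1 + ‖v'‖^2 := by positivity
      have hGH_eq : G v' * H v' = ‖v - v'‖ ^ (γ+2)
          * Real.sqrt ((2 * π) ^ (3 / 2 : ℝ) * Real.exp (-‖v'‖ ^ 2 / 2)) * |f v'| := by
        have hone : (1 + ‖v'‖ ^ 2) ^ (-(γ/4)) * (1 + ‖v'‖ ^ 2) ^ (γ / 4) = 1 := by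
          rw [← Real.rpow_add hr2]; norm_num
        calc G v' * H v' = (‖v - v'‖ ^ (γ+2)
              * Real.sqrt ((2 * π) ^ (3 / 2 : ℝ) * Real.exp (-‖v'‖ ^ 2 / 2)) * |f v'|)
              * ((1 + ‖v'‖ ^ 2) ^ (-(γ/4)) * (1 + ‖v'‖ ^ 2) ^ (γ / 4)) := by
              rw [hGdef, hHdef]; ring
          _ = _ := by rw [hone, mul_one]
      show _ ≤ G v' * H v'
      rw [hGH_eq]
      have hmono : ‖v - v'‖ ^ γ ≤ ‖v - v'‖ ^ (γ+2) :=
        Real.rpow_le_rpow_of_exponent_le hv'1 (by linarith)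
      apply mul_le_mul_of_nonneg_right _ (abs_nonneg _)
      exact mul_le_mul_of_nonneg_right hmono (Real.sqrt_nonneg _)
  -- step 2 : Cauchy-Schwarz
  have hpq : (2:ℝ).HolderConjugate 2 := Real.HolderConjugate.two_two
  have h2 : ENNReal.ofReal (2:ℝ) = 2 := by norm_num
  have hstep2 : ∫ v' in S, G v' * H v'
      ≤ (∫ v' in S, (G v')^2) ^ (1/2:ℝ) * (∫ v' in S, (H v')^2) ^ (1/2:ℝ) := by
    have hG0 : ∀ x, 0 ≤ G x := fun x => by
      simp only [hGdef]; positivity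
    have hH0 : ∀ x, 0 ≤ H x := fun x => by
      simp only [hHdef]; positivity
    have := integral_mul_le_Lp_mul_Lq_of_nonneg (μ := volume.restrict S) (f := G) (g := H) hpq
      (Filter.Eventually.of_forall hG0) (Filter.Eventually.of_forall hH0)
      (by rw [h2]; exact hGmem) (by rw [h2]; exact hHmem)
    simpa [Real.rpow_two] using this
  -- bounds on each factor
  have hG2nonneg : (0:ℝ) ≤ ∫ v' in S, (G v')^2 := integral_nonneg fun _ => sq_nonneg _
  have hH2nonneg : (0:ℝ) ≤ ∫ v' in S, (H v')^2 := integral_nonneg fun _ => sq_nonneg _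
  have hIH : ∫ v' in S, (H v')^2 ≤ ∫ v', (H v')^2 :=
    setIntegral_le_integral hH2 (Filter.Eventually.of_forall fun _ => sq_nonneg _)
  have hIHnonneg : (0:ℝ) ≤ ∫ v', (H v')^2 := integral_nonneg fun _ => sq_nonneg _
  have hFA : (∫ v' in S, (G v')^2) ^ (1/2:ℝ)
      ≤ C₀ ^ (1/2:ℝ) * (1 + ‖v‖^2) ^ ((γ+2)/2) := by
    calc (∫ v' in S, (G v')^2) ^ (1/2:ℝ)
        ≤ (C₀ * (1 + ‖v‖^2)^(γ+2)) ^ (1/2:ℝ) :=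
          Real.rpow_le_rpow hG2nonneg hkey (by norm_num)
      _ = C₀ ^ (1/2:ℝ) * ((1 + ‖v‖^2)^(γ+2)) ^ (1/2:ℝ) :=
          Real.mul_rpow hC₀0.le hApow.le
      _ = C₀ ^ (1/2:ℝ) * (1 + ‖v‖^2) ^ ((γ+2)/2) := by
          rw [← Real.rpow_mul hv2.le, show (γ+2)*(1/2:ℝ) = (γ+2)/2 by ring]
  have hFB : (∫ v' in S, (H v')^2) ^ (1/2:ℝ) ≤ (∫ v', (H v')^2) ^ (1/2:ℝ) :=
    Real.rpow_le_rpow hH2nonneg hIH (by norm_num)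
  -- conclude
  calc (∫ v' in S,
      ‖v - v'‖ ^ γ * Real.sqrt ((2 * π) ^ (3 / 2 : ℝ) * Real.exp (-‖v'‖ ^ 2 / 2)) * |f v'|)
      ≤ ∫ v' in S, G v' * H v' := hstep1
    _ ≤ (∫ v' in S, (G v')^2) ^ (1/2:ℝ) * (∫ v' in S, (H v')^2) ^ (1/2:ℝ) := hstep2
    _ ≤ (C₀ ^ (1/2:ℝ) * (1 + ‖v‖^2) ^ ((γ+2)/2)) * (∫ v', (H v')^2) ^ (1/2:ℝ) := by
        apply mul_le_mul hFA hFB (Real.rpow_nonneg hH2nonneg _)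
        positivity
    _ = C₀ ^ (1/2:ℝ) * (1 + ‖v‖^2) ^ ((γ+2)/2) * (∫ v', (H v')^2) ^ (1/2:ℝ) := by ring
end

section
/- Let −3 < γ < 0 and let f be a Schwartz function on ℝ³. Define ‖f‖_* = ‖⟨·⟩^{γ/2} ∇f‖_{L²} + ‖⟨·⟩^{1+γ/2} f‖_{L²}. Then there is a constant C > 0 (depending only on γ) such that ‖⟨·⟩^{γ/2} f‖_{L³(ℝ³)} ≤ C ‖f‖_*. -/
open MeasureTheory Real SchwartzMap

section Aux
open Filter Metric ENNReal NNReal Module Topology InnerProductSpace RealInnerProductSpace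

noncomputable section

private abbrev E3' := EuclideanSpace ℝ (Fin 3)

private lemma sobolev_aux' : ∃ C : ℝ, 0 < C ∧ ∀ g : E3' → ℝ, ContDiff ℝ 1 g →
    eLpNorm g 6 (volume : Measure E3') ≤ ENNReal.ofReal C *
      (eLpNorm (fderiv ℝ g) 2 (volume : Measure E3') + eLpNorm g 2 (volume : Measure E3')) := by
  -- bump function
  set φ : ContDiffBump (0 : E3') := ⟨1, 2, one_pos, one_lt_two⟩ with hφ
  obtain ⟨K, hK⟩ : ∃ K, ∀ y, ‖fderiv ℝ (⇑φ) y‖ ≤ K :=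
    (φ.hasCompactSupport.fderiv ℝ).exists_bound_of_continuous
      ((φ.contDiff (n := 1)).continuous_fderiv (by simp))
  have hK0 : 0 ≤ K := le_trans (norm_nonneg _) (hK 0)
  set C₂ : ℝ≥0 := eLpNormLESNormFDerivOfEqInnerConst (volume : Measure E3') 2 with hC₂
  refine ⟨((C₂ : ℝ) + 1) * (1 + K), by positivity, fun g hg => ?_⟩
  -- the cutoffs
  set c : ℕ → ℝ := fun n => ((n : ℝ) + 1)⁻¹ with hc
  have hcpos : ∀ n, 0 < c n := fun n => by positivity
  have hcle : ∀ n, c n ≤ 1 := fun n => by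
    rw [hc]; rw [inv_le_one_iff₀]; right; linarith [Nat.cast_nonneg (α := ℝ) n]
  set u : ℕ → E3' → ℝ := fun n x => φ (c n • x) * g x with hu
  have hχdiff : ∀ n, ContDiff ℝ 1 (fun x : E3' => φ (c n • x)) := fun n =>
    (φ.contDiff.comp (contDiff_const_smul _))
  have hudiff : ∀ n, ContDiff ℝ 1 (u n) := fun n => (hχdiff n).mul hg
  have hucs : ∀ n, HasCompactSupport (u n) := by
    intro n
    have h1 : HasCompactSupport (fun x : E3' => φ (c n • x)) := by
      have := φ.hasCompactSupport.comp_homeomorph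
        (Homeomorph.smul (Units.mk0 (c n) (hcpos n).ne'))
      simpa [Homeomorph.smul, Units.smul_def, Function.comp_def] using this
    exact h1.mul_right
  -- derivative bound
  have hderiv : ∀ n x, ‖fderiv ℝ (u n) x‖ ≤ ‖fderiv ℝ g x‖ + K * ‖g x‖ := by
    intro n x
    have hχd : HasFDerivAt (fun x : E3' => φ (c n • x))
        ((fderiv ℝ (⇑φ) (c n • x)).comp (c n • ContinuousLinearMap.id ℝ E3')) x := by
      have h1 : HasFDerivAt (fun x : E3' => c n • x) (c n • ContinuousLinearMap.id ℝ E3') x :=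
        (hasFDerivAt_id x).const_smul (c n)
      exact (((φ.contDiff (n := 1)).differentiable (by simp) (c n • x)).hasFDerivAt).comp x h1
    have hmul : HasFDerivAt (u n)
        ((fun x : E3' => φ (c n • x)) x • fderiv ℝ g x +
          g x • ((fderiv ℝ (⇑φ) (c n • x)).comp (c n • ContinuousLinearMap.id ℝ E3'))) x :=
      hχd.mul ((hg.differentiable one_ne_zero x).hasFDerivAt)
    rw [hmul.fderiv]
    refine le_trans (norm_add_le _ _) ?_
    gcongr ?_ + ?_
    · rw [norm_smul]
      have : ‖φ (c n • x)‖ ≤ 1 := by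
        rw [Real.norm_eq_abs, abs_of_nonneg (φ.nonneg)]; exact φ.le_one
      calc ‖φ (c n • x)‖ * ‖fderiv ℝ g x‖ ≤ 1 * ‖fderiv ℝ g x‖ := by gcongr
        _ = ‖fderiv ℝ g x‖ := one_mul _
    · rw [norm_smul]
      have h2 : ‖(fderiv ℝ (⇑φ) (c n • x)).comp (c n • ContinuousLinearMap.id ℝ E3')‖ ≤ K := by
        refine le_trans (ContinuousLinearMap.opNorm_comp_le _ _) ?_
        have h3 : ‖c n • ContinuousLinearMap.id ℝ E3'‖ ≤ 1 := by
          refine ContinuousLinearMap.opNorm_le_bound _ one_pos.le (fun y => ?_)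
          rw [one_mul]
          simp only [ContinuousLinearMap.smul_apply, ContinuousLinearMap.id_apply, norm_smul]
          calc ‖c n‖ * ‖y‖ ≤ 1 * ‖y‖ := by
                refine mul_le_mul_of_nonneg_right ?_ (norm_nonneg _)
                rw [Real.norm_eq_abs, abs_of_pos (hcpos n)]; exact hcle n
            _ = ‖y‖ := one_mul _
        calc ‖fderiv ℝ (⇑φ) (c n • x)‖ * ‖c n • ContinuousLinearMap.id ℝ E3'‖
            ≤ K * 1 := mul_le_mul (hK _) h3 (norm_nonneg _) hK0
          _ = K := mul_one K
      rw [mul_comm]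
      gcongr
  -- Sobolev for each u n
  have hsob : ∀ n, eLpNorm (u n) 6 (volume : Measure E3') ≤
      (C₂ : ℝ≥0∞) * (eLpNorm (fderiv ℝ g) 2 volume + ENNReal.ofReal K * eLpNorm g 2 volume) := by
    intro n
    have h1 := eLpNorm_le_eLpNorm_fderiv_of_eq_inner (volume : Measure E3') (hudiff n) (hucs n)
      (p := 2) (p' := 6) (by norm_num) (by rw [finrank_euclideanSpace_fin]; norm_num)
      (by rw [finrank_euclideanSpace_fin]; norm_num)
    have h2 : eLpNorm (fderiv ℝ (u n)) 2 (volume : Measure E3') ≤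
        eLpNorm (fderiv ℝ g) 2 volume + ENNReal.ofReal K * eLpNorm g 2 volume := by
      have hb : ∀ x, ‖fderiv ℝ (u n) x‖ ≤ ‖(fun x => ‖fderiv ℝ g x‖ + K * ‖g x‖) x‖ := by
        intro x
        refine le_trans (hderiv n x) (le_abs_self _)
      refine le_trans (eLpNorm_mono hb) ?_
      have hmeas1 : AEStronglyMeasurable (fun x : E3' => ‖fderiv ℝ g x‖) volume :=
        ((hg.continuous_fderiv one_ne_zero).norm).aestronglyMeasurable
      have hmeas2 : AEStronglyMeasurable (fun x : E3' => K * ‖g x‖) volume :=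
        (continuous_const.mul (hg.continuous.norm)).aestronglyMeasurable
      refine le_trans (eLpNorm_add_le hmeas1 hmeas2 one_le_two) ?_
      gcongr ?_ + ?_
      · rw [eLpNorm_norm]
      · have : (fun x : E3' => K * ‖g x‖) = K • (fun x : E3' => ‖g x‖) := by
          funext x; simp [smul_eq_mul]
        rw [this, eLpNorm_const_smul, eLpNorm_norm]
        have hKeq : ‖K‖ₑ = ENNReal.ofReal K := by
          rw [← ofReal_norm, Real.norm_eq_abs, abs_of_nonneg hK0]
        rw [hKeq]
    calc eLpNorm (u n) 6 (volume : Measure E3') = eLpNorm (u n) ((6:ℝ≥0) : ℝ≥0∞) volume := by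
          norm_num
      _ ≤ (C₂ : ℝ≥0∞) * eLpNorm (fderiv ℝ (u n)) ((2:ℝ≥0) : ℝ≥0∞) volume := h1
      _ = (C₂ : ℝ≥0∞) * eLpNorm (fderiv ℝ (u n)) 2 volume := by norm_num
      _ ≤ _ := by gcongr
  -- Fatou
  have hconv : ∀ᵐ x : E3' ∂(volume : Measure E3'), Tendsto (fun n => u n x) atTop (𝓝 (g x)) := by
    refine Eventually.of_forall (fun x => ?_)
    refine tendsto_atTop_of_eventually_const (i₀ := ⌈‖x‖⌉₊) (fun n hn => ?_)
    have h1 : φ (c n • x) = 1 := by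
      refine φ.one_of_mem_closedBall ?_
      rw [mem_closedBall, dist_zero_right, norm_smul, Real.norm_eq_abs, abs_of_pos (hcpos n)]
      rw [hc]
      rw [inv_mul_le_iff₀ (by positivity)]
      have hrIn : φ.rIn = 1 := rfl
      rw [hrIn, mul_one]
      calc ‖x‖ ≤ ⌈‖x‖⌉₊ := Nat.le_ceil _
        _ ≤ (n : ℝ) := by exact_mod_cast hn
        _ ≤ (n : ℝ) + 1 := by linarith
      -- rIn = 1
    show φ (c n • x) * g x = g x
    rw [h1, one_mul]
  have hfatou := Lp.eLpNorm_lim_le_liminf_eLpNorm (p := 6) (μ := (volume : Measure E3'))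
    (fun n => ((hudiff n).continuous).aestronglyMeasurable) g hconv
  refine le_trans hfatou ?_
  refine le_trans (liminf_le_liminf (Eventually.of_forall hsob)) ?_
  rw [liminf_const]
  -- final constant juggling
  set A := eLpNorm (fderiv ℝ g) 2 (volume : Measure E3')
  set B := eLpNorm g 2 (volume : Measure E3')
  have step1 : A + ENNReal.ofReal K * B ≤ (1 + ENNReal.ofReal K) * (A + B) := by
    calc A + ENNReal.ofReal K * B ≤ 1 * (A + B) + ENNReal.ofReal K * (A + B) := by
          rw [one_mul]; gcongr <;> simp [le_add_iff_nonneg_left, le_add_iff_nonneg_right]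
      _ = (1 + ENNReal.ofReal K) * (A + B) := by ring
  have step2 : (C₂ : ℝ≥0∞) * (A + ENNReal.ofReal K * B) ≤
      ENNReal.ofReal ((C₂ : ℝ) + 1) * ((1 + ENNReal.ofReal K) * (A + B)) := by
    refine mul_le_mul' ?_ step1
    rw [← ENNReal.ofReal_coe_nnreal]
    exact ENNReal.ofReal_le_ofReal (by linarith)
  refine le_trans step2 (le_of_eq ?_)
  rw [← mul_assoc, ← ENNReal.ofReal_one, ← ENNReal.ofReal_add zero_le_one hK0,
    ← ENNReal.ofReal_mul (by positivity)]

/-- For `−3 < γ < 0` there is `C > 0` such that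
`‖⟨·⟩^{γ/2} f‖_{L³} ≤ C (‖⟨·⟩^{γ/2}∇f‖_{L²} + ‖⟨·⟩^{1+γ/2} f‖_{L²})` for all Schwartz `f`. -/
theorem weighted_L3_by_energy_norm (γ : ℝ) (hγ1 : -3 < γ) (hγ2 : γ < 0) :
    ∃ C > 0, ∀ f : SchwartzMap (EuclideanSpace ℝ (Fin 3)) ℝ,
      eLpNorm (fun v => (1 + ‖v‖ ^ 2) ^ (γ / 4) * f v) 3
          (volume : Measure (EuclideanSpace ℝ (Fin 3)))
        ≤ ENNReal.ofReal C *
            (eLpNorm (fun v => (1 + ‖v‖ ^ 2) ^ (γ / 4) • gradient (⇑f) v) 2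
                (volume : Measure (EuclideanSpace ℝ (Fin 3)))
              + eLpNorm (fun v => (1 + ‖v‖ ^ 2) ^ ((1 + γ / 2) / 2) * f v) 2
                (volume : Measure (EuclideanSpace ℝ (Fin 3)))) := by
  obtain ⟨C₆, hC₆pos, hC₆⟩ := sobolev_aux'
  refine ⟨1 + C₆ * (2 + |γ|/2), by positivity, fun f => ?_⟩
  -- notation
  set q : E3' → ℝ := fun v => 1 + ‖v‖ ^ 2 with hqdef
  have hq1 : ∀ v, 1 ≤ q v := fun v => le_add_of_nonneg_right (by positivity)
  have hq0 : ∀ v, 0 < q v := fun v => lt_of_lt_of_le one_pos (hq1 v)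
  set w : E3' → ℝ := fun v => q v ^ (γ/4) with hwdef
  set w₂ : E3' → ℝ := fun v => q v ^ ((1 + γ/2)/2) with hw2def
  have hwpos : ∀ v, 0 < w v := fun v => rpow_pos_of_pos (hq0 v) _
  have hw2pos : ∀ v, 0 < w₂ v := fun v => rpow_pos_of_pos (hq0 v) _
  have hww2 : ∀ v, w v ≤ w₂ v := fun v => by
    refine rpow_le_rpow_of_exponent_le (hq1 v) (by linarith)
  set g : E3' → ℝ := fun v => w v * f v with hgdef
  set A := eLpNorm (fun v : E3' => w v • gradient (⇑f) v) 2 (volume : Measure E3') with hA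
  set B := eLpNorm (fun v : E3' => w₂ v * f v) 2 (volume : Measure E3') with hB
  -- smoothness
  have hqc : ContDiff ℝ 1 q := contDiff_const.add (contDiff_norm_sq (𝕜 := ℝ))
  have hwc : ContDiff ℝ 1 w := by
    rw [contDiff_iff_contDiffAt] -- may not exist; fallback below
    intro v
    exact (hqc.contDiffAt).rpow_const_of_ne (hq0 v).ne'
  have hw2c : ContDiff ℝ 1 w₂ := by
    rw [contDiff_iff_contDiffAt]
    intro v
    exact (hqc.contDiffAt).rpow_const_of_ne (hq0 v).ne'
  have hfc : ContDiff ℝ 1 ⇑f := f.smooth 1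
  have hgc : ContDiff ℝ 1 g := hwc.mul hfc
  have hfderivc : Continuous (fderiv ℝ ⇑f) := hfc.continuous_fderiv one_ne_zero
  -- derivative of w and its bound
  have hwd : ∀ v : E3', HasFDerivAt w
      ((γ/4 * q v ^ (γ/4 - 1)) • (2 • (innerSL ℝ v).comp (ContinuousLinearMap.id ℝ E3'))) v := by
    intro v
    have hqd : HasFDerivAt q (2 • (innerSL ℝ v).comp (ContinuousLinearMap.id ℝ E3')) v := by
      simpa [hqdef] using ((hasFDerivAt_id v).norm_sq.const_add 1)
    exact (Real.hasDerivAt_rpow_const (p := γ/4) (Or.inl (hq0 v).ne')).comp_hasFDerivAt v hqd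
  have hDwbound : ∀ v : E3',
      ‖((γ/4 * q v ^ (γ/4 - 1)) • (2 • (innerSL ℝ v).comp (ContinuousLinearMap.id ℝ E3')))‖
        ≤ |γ|/2 * w₂ v := by
    intro v
    refine ContinuousLinearMap.opNorm_le_bound _ (by positivity) (fun y => ?_)
    have happ : (((γ/4 * q v ^ (γ/4 - 1)) • (2 • (innerSL ℝ v).comp
        (ContinuousLinearMap.id ℝ E3'))) y) = (γ/4 * q v ^ (γ/4 - 1)) * (2 * ⟪v, y⟫_ℝ) := by
      simp [two_smul]
      ring
    rw [happ, Real.norm_eq_abs, abs_mul, abs_mul]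
    have h1 : |⟪v, y⟫_ℝ| ≤ ‖v‖ * ‖y‖ := abs_real_inner_le_norm v y
    have h3 : ‖v‖ ≤ q v ^ ((1:ℝ)/2) := by
      have h4 : ‖v‖ = (‖v‖ ^ 2) ^ ((1:ℝ)/2) := by
        rw [← Real.rpow_natCast (‖v‖) 2, ← Real.rpow_mul (norm_nonneg v)]
        norm_num
      rw [h4]
      refine Real.rpow_le_rpow (by positivity) ?_ (by norm_num)
      simp [hqdef]
    calc |γ/4| * |q v ^ (γ/4 - 1)| * |2 * ⟪v, y⟫_ℝ|
        ≤ (|γ|/4 * q v ^ (γ/4 - 1)) * (2 * (‖v‖ * ‖y‖)) := by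
          rw [abs_mul, abs_two, abs_of_pos (rpow_pos_of_pos (hq0 v) _),
            show |γ/4| = |γ|/4 by rw [abs_div]; norm_num]
          gcongr
      _ = (|γ|/2 * (q v ^ (γ/4 - 1) * ‖v‖)) * ‖y‖ := by ring
      _ ≤ (|γ|/2 * (q v ^ (γ/4 - 1) * q v ^ ((1:ℝ)/2))) * ‖y‖ := by
          gcongr
      _ = (|γ|/2 * q v ^ (γ/4 - 1 + 1/2)) * ‖y‖ := by
          rw [← Real.rpow_add (hq0 v)]
      _ ≤ (|γ|/2 * w₂ v) * ‖y‖ := by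
          gcongr
          rw [hw2def]
          refine Real.rpow_le_rpow_of_exponent_le (hq1 v) (by linarith)
  -- pointwise derivative bound for g
  have hgd : ∀ v : E3', ‖fderiv ℝ g v‖ ≤
      ‖w v • gradient (⇑f) v‖ + |γ|/2 * ‖w₂ v * f v‖ := by
    intro v
    have hmul : HasFDerivAt g (w v • fderiv ℝ (⇑f) v + f v •
        ((γ/4 * q v ^ (γ/4 - 1)) • (2 • (innerSL ℝ v).comp (ContinuousLinearMap.id ℝ E3')))) v :=
      (hwd v).mul ((hfc.differentiable one_ne_zero v).hasFDerivAt)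
    rw [hmul.fderiv]
    refine le_trans (norm_add_le _ _) ?_
    gcongr ?_ + ?_
    · rw [norm_smul, norm_smul, gradient, LinearIsometryEquiv.norm_map]
    · rw [norm_smul]
      rw [Real.norm_eq_abs (w₂ v * f v), abs_mul, abs_of_pos (hw2pos v)]
      calc ‖f v‖ * ‖(γ/4 * q v ^ (γ/4 - 1)) • (2 • (innerSL ℝ v).comp (ContinuousLinearMap.id ℝ E3'))‖
          ≤ ‖f v‖ * (|γ|/2 * w₂ v) := by gcongr; exact hDwbound v
        _ = |γ|/2 * (w₂ v * |f v|) := by rw [Real.norm_eq_abs]; ring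
  -- eLpNorm of fderiv g
  have hgradc : Continuous (fun v : E3' => w v • gradient (⇑f) v) := by
    refine hwc.continuous.smul ?_
    exact (LinearIsometryEquiv.continuous _).comp hfderivc
  have hD : eLpNorm (fderiv ℝ g) 2 (volume : Measure E3') ≤ A + ENNReal.ofReal (|γ|/2) * B := by
    have hb : ∀ v, ‖fderiv ℝ g v‖ ≤
        ‖(fun v => ‖w v • gradient (⇑f) v‖ + |γ|/2 * ‖w₂ v * f v‖) v‖ :=
      fun v => le_trans (hgd v) (le_abs_self _)
    refine le_trans (eLpNorm_mono hb) ?_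
    have hm1 : AEStronglyMeasurable (fun v : E3' => ‖w v • gradient (⇑f) v‖) volume :=
      hgradc.norm.aestronglyMeasurable
    have hm2 : AEStronglyMeasurable (fun v : E3' => |γ|/2 * ‖w₂ v * f v‖) volume :=
      (continuous_const.mul ((hw2c.continuous.mul hfc.continuous).norm)).aestronglyMeasurable
    refine le_trans (eLpNorm_add_le hm1 hm2 one_le_two) ?_
    gcongr ?_ + ?_
    · rw [eLpNorm_norm]
    · have heq : (fun v : E3' => |γ|/2 * ‖w₂ v * f v‖) =
          (|γ|/2) • (fun v : E3' => ‖w₂ v * f v‖) := by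
        funext v; simp [smul_eq_mul]
      rw [heq, eLpNorm_const_smul, eLpNorm_norm]
      have hKeq : ‖|γ|/2‖ₑ = ENNReal.ofReal (|γ|/2) := by
        rw [← ofReal_norm, Real.norm_eq_abs, abs_of_nonneg (by positivity)]
      rw [hKeq]
  -- L² bound for g
  have hB2 : eLpNorm g 2 (volume : Measure E3') ≤ B := by
    refine eLpNorm_mono (fun v => ?_)
    rw [Real.norm_eq_abs, Real.norm_eq_abs, abs_mul, abs_mul,
      abs_of_pos (hwpos v), abs_of_pos (hw2pos v)]
    gcongr
    exact hww2 v
  -- L⁶ bound for g (Sobolev)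
  have hS : eLpNorm g 6 (volume : Measure E3') ≤
      ENNReal.ofReal C₆ * (A + ENNReal.ofReal (|γ|/2) * B + B) := by
    refine le_trans (hC₆ g hgc) ?_
    gcongr
  -- interpolation
  set h : E3' → ℝ := fun v => |g v| ^ ((1:ℝ)/2) with hhdef
  have hhc : Continuous h := by
    refine (hgc.continuous.abs).rpow_const (fun v => Or.inr (by norm_num))
  have hinterp : eLpNorm g 3 (volume : Measure E3') ≤
      (eLpNorm g 2 (volume : Measure E3')) ^ ((1:ℝ)/2) *
      (eLpNorm g 6 (volume : Measure E3')) ^ ((1:ℝ)/2) := by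
    have heq : (fun v : E3' => h v * h v) = fun v => |g v| := by
      funext v
      rw [hhdef, ← Real.rpow_add' (abs_nonneg _) (by norm_num)]
      norm_num
    have hhold : eLpNorm (fun v : E3' => h v * h v) 3 volume ≤
        eLpNorm h 4 volume * eLpNorm h 12 volume := by
      have hT : ENNReal.HolderTriple 4 12 3 := ⟨by
        rw [← ENNReal.toReal_eq_toReal_iff' (by simp) (by simp), ENNReal.toReal_add (by simp) (by simp)]
        simp only [ENNReal.toReal_inv, ENNReal.toReal_ofNat]
        norm_num⟩
      refine le_of_le_of_eq (eLpNorm_le_eLpNorm_mul_eLpNorm'_of_norm (p := 4) (q := 12)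
        hhc.aestronglyMeasurable hhc.aestronglyMeasurable (· * ·) 1
        (Eventually.of_forall (fun v => ?_))) (by simp)
      rw [Real.norm_eq_abs, abs_mul, Real.norm_eq_abs, NNReal.coe_one, one_mul]
    have h4 : eLpNorm h 4 volume = (eLpNorm g 2 (volume : Measure E3')) ^ ((1:ℝ)/2) := by
      have := eLpNorm_norm_rpow g (q := (1:ℝ)/2) (p := 4) (μ := (volume : Measure E3'))
        (by norm_num)
      simp only [Real.norm_eq_abs] at this
      rw [hhdef, this]
      congr 1
      rw [show (1/2 : ℝ) = (2:ℝ)⁻¹ by norm_num, ENNReal.ofReal_inv_of_pos two_pos,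
        ENNReal.ofReal_ofNat, show (4:ℝ≥0∞) = 2 * 2 by norm_num, mul_assoc,
        ENNReal.mul_inv_cancel (by norm_num) (by norm_num), mul_one]
    have h12 : eLpNorm h 12 volume = (eLpNorm g 6 (volume : Measure E3')) ^ ((1:ℝ)/2) := by
      have := eLpNorm_norm_rpow g (q := (1:ℝ)/2) (p := 12) (μ := (volume : Measure E3'))
        (by norm_num)
      simp only [Real.norm_eq_abs] at this
      rw [hhdef, this]
      congr 1
      rw [show (1/2 : ℝ) = (2:ℝ)⁻¹ by norm_num, ENNReal.ofReal_inv_of_pos two_pos,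
        ENNReal.ofReal_ofNat, show (12:ℝ≥0∞) = 6 * 2 by norm_num, mul_assoc,
        ENNReal.mul_inv_cancel (by norm_num) (by norm_num), mul_one]
    calc eLpNorm g 3 (volume : Measure E3') = eLpNorm (fun v : E3' => h v * h v) 3 volume := by
          rw [heq, ← eLpNorm_norm (f := g)]
          simp only [Real.norm_eq_abs]
      _ ≤ eLpNorm h 4 volume * eLpNorm h 12 volume := hhold
      _ = _ := by rw [h4, h12]
  -- combine
  set T := A + B with hT
  have hsum : A + ENNReal.ofReal (|γ|/2) * B + B ≤ ENNReal.ofReal (2 + |γ|/2) * T := by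
    calc A + ENNReal.ofReal (|γ|/2) * B + B
        ≤ T + ENNReal.ofReal (|γ|/2) * T + T := by
          gcongr
          · exact le_add_right le_rfl
          · exact le_add_left le_rfl
          · exact le_add_left le_rfl
      _ = (2 + ENNReal.ofReal (|γ|/2)) * T := by ring
      _ = ENNReal.ofReal (2 + |γ|/2) * T := by
          rw [ENNReal.ofReal_add (by norm_num) (by positivity), ENNReal.ofReal_ofNat]
  have hfinal : eLpNorm g 3 (volume : Measure E3') ≤
      ENNReal.ofReal (1 + C₆ * (2 + |γ|/2)) * T := by
    have h1 : eLpNorm g 3 (volume : Measure E3') ≤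
        eLpNorm g 2 (volume : Measure E3') + eLpNorm g 6 (volume : Measure E3') := by
      refine le_trans hinterp ?_
      calc (eLpNorm g 2 (volume : Measure E3')) ^ ((1:ℝ)/2) *
            (eLpNorm g 6 (volume : Measure E3')) ^ ((1:ℝ)/2)
          ≤ (eLpNorm g 2 (volume : Measure E3') + eLpNorm g 6 (volume : Measure E3')) ^ ((1:ℝ)/2) *
            (eLpNorm g 2 (volume : Measure E3') + eLpNorm g 6 (volume : Measure E3')) ^ ((1:ℝ)/2) :=
            mul_le_mul' (ENNReal.rpow_le_rpow le_self_add (by norm_num))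
              (ENNReal.rpow_le_rpow le_add_self (by norm_num))
        _ = _ := by
            rw [← ENNReal.rpow_add_of_nonneg _ _ (by norm_num) (by norm_num)]
            norm_num
    refine le_trans h1 ?_
    have h2 : eLpNorm g 6 (volume : Measure E3') ≤ ENNReal.ofReal (C₆ * (2 + |γ|/2)) * T := by
      refine le_trans hS ?_
      rw [ENNReal.ofReal_mul hC₆pos.le, mul_assoc]
      exact mul_le_mul' le_rfl hsum
    calc eLpNorm g 2 (volume : Measure E3') + eLpNorm g 6 (volume : Measure E3')
        ≤ 1 * T + ENNReal.ofReal (C₆ * (2 + |γ|/2)) * T := by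
          rw [one_mul]
          exact add_le_add (le_trans hB2 (le_add_left le_rfl)) h2
      _ = (1 + ENNReal.ofReal (C₆ * (2 + |γ|/2))) * T := by ring
      _ = ENNReal.ofReal (1 + C₆ * (2 + |γ|/2)) * T := by
          rw [ENNReal.ofReal_add zero_le_one (by positivity), ENNReal.ofReal_one]
  -- translate statement
  calc eLpNorm (fun v : E3' => (1 + ‖v‖ ^ 2) ^ (γ / 4) * f v) 3 (volume : Measure E3')
      = eLpNorm g 3 (volume : Measure E3') := rfl
    _ ≤ ENNReal.ofReal (1 + C₆ * (2 + |γ|/2)) * T := hfinal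
    _ = _ := rfl
end
end Aux
end
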